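/- Under the inter-cluster common influence assumption, all eigenvalues of the reduced matrix L̂ have positive real parts if and only if the Laplacian L of the full graph G and the quotient Laplacian L_G have equal numbers of zero eigenvalues (counted with algebraic multiplicity). -/

import Mathlib

open Matrix Polynomial

lemma my_charpoly_conj {n : Type*} [Fintype n] [DecidableEq n] {R : Type*} [CommRing R]
    (U V M : Matrix n n R) (h : U * V = 1) :
    (U * M * V).charpoly = M.charpoly := by
  have hs : Matrix.scalar n (X : R[X]) = (X : R[X]) • (1 : Matrix n n R[X]) := by
    ext i j
    by_cases hij : i = j <;>
      simp [Matrix.scalar_apply, Matrix.diagonal, Matrix.one_apply, hij]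
  have hUV : (C : R →+* R[X]).mapMatrix U * (C : R →+* R[X]).mapMatrix V = 1 := by
    rw [← _root_.map_mul, h, _root_.map_one]
  have hmm : charmatrix (U * M * V) =
      (C : R →+* R[X]).mapMatrix U * charmatrix M * (C : R →+* R[X]).mapMatrix V := by
    rw [charmatrix, charmatrix, mul_sub, sub_mul]
    congr 1
    · rw [hs, mul_smul_comm, mul_one, smul_mul_assoc, hUV]
    · rw [_root_.map_mul, _root_.map_mul]
  have hdet : ((C : R →+* R[X]).mapMatrix U).det * ((C : R →+* R[X]).mapMatrix V).det = 1 := by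
    rw [← det_mul, hUV, det_one]
  rw [Matrix.charpoly, Matrix.charpoly, hmm, det_mul, det_mul, mul_right_comm, hdet, one_mul]

lemma my_spec_iff_root {m : Type*} [Fintype m] [DecidableEq m] (A : Matrix m m ℂ) (μ : ℂ) :
    μ ∈ spectrum ℂ A ↔ A.charpoly.IsRoot μ := by
  have hch : A.charpoly.eval μ = (algebraMap ℂ (Matrix m m ℂ) μ - A).det := by
    rw [Matrix.charpoly,
      show eval μ A.charmatrix.det = ((Polynomial.evalRingHom μ).mapMatrix A.charmatrix).det from
        RingHom.map_det (Polynomial.evalRingHom μ) A.charmatrix]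
    congr 1
    ext i j
    by_cases hij : i = j <;>
      simp [charmatrix_apply, Matrix.diagonal, Matrix.algebraMap_matrix_apply,
        Matrix.sub_apply, hij]
  rw [spectrum.mem_iff, Matrix.isUnit_iff_isUnit_det, isUnit_iff_ne_zero, not_not,
    Polynomial.IsRoot, hch]

lemma my_gersh {m : Type*} [Fintype m] [DecidableEq m] (L : Matrix m m ℝ)
    (hoff : ∀ v k, v ≠ k → L v k ≤ 0) (hrow : ∀ v, ∑ k, L v k = 0)
    {μ : ℂ} (hμ : μ ∈ spectrum ℂ (L.map Complex.ofReal)) : μ = 0 ∨ 0 < μ.re := by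
  classical
  have hroot := (my_spec_iff_root _ μ).mp hμ
  have hdet : (algebraMap ℂ (Matrix m m ℂ) μ - L.map Complex.ofReal).det = 0 := by
    have hch : (L.map Complex.ofReal).charpoly.eval μ
        = (algebraMap ℂ (Matrix m m ℂ) μ - L.map Complex.ofReal).det := by
      rw [Matrix.charpoly,
        show Polynomial.eval μ (L.map Complex.ofReal).charmatrix.det
            = ((Polynomial.evalRingHom μ).mapMatrix (L.map Complex.ofReal).charmatrix).det from
          RingHom.map_det (Polynomial.evalRingHom μ) (L.map Complex.ofReal).charmatrix]
      congr 1
      ext i j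
      by_cases hij : i = j <;>
        simp [Matrix.charmatrix_apply, Matrix.diagonal, Matrix.algebraMap_matrix_apply,
          Matrix.sub_apply, hij]
    rw [← hch]; exact hroot
  obtain ⟨v, hv0, hvec⟩ := (Matrix.exists_mulVec_eq_zero_iff).mpr hdet
  obtain ⟨j, hj⟩ := Function.ne_iff.mp hv0
  obtain ⟨i, -, hi⟩ := Finset.exists_max_image Finset.univ (fun k => ‖v k‖)
    ⟨j, Finset.mem_univ j⟩
  have hvi : 0 < ‖v i‖ :=
    lt_of_lt_of_le (by simpa using hj) (hi j (Finset.mem_univ j))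
  have hrowi : μ * v i = ∑ k, (L i k : ℂ) * v k := by
    have h := congrFun hvec i
    rw [Matrix.sub_mulVec, Algebra.algebraMap_eq_smul_one, Matrix.smul_mulVec,
      Matrix.one_mulVec] at h
    have h' : μ * v i - ((L.map Complex.ofReal) *ᵥ v) i = 0 := by
      simpa [Pi.sub_apply] using h
    rw [sub_eq_zero] at h'
    rw [h']
    simp [Matrix.mulVec, dotProduct, Matrix.map_apply]
  -- isolate the off-diagonal part
  have hsplit : (μ - (L i i : ℂ)) * v i = ∑ k ∈ Finset.univ.erase i, (L i k : ℂ) * v k := by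
    have := Finset.sum_erase_add Finset.univ (fun k => (L i k : ℂ) * v k) (Finset.mem_univ i)
    rw [sub_mul, hrowi, ← this]
    ring
  have hcsum : ∑ k ∈ Finset.univ.erase i, -(L i k) = L i i := by
    have h := hrow i
    rw [← Finset.sum_erase_add Finset.univ (fun k => L i k) (Finset.mem_univ i)] at h
    rw [Finset.sum_neg_distrib]
    linarith
  have habs : ‖μ - (L i i : ℂ)‖ * ‖v i‖ ≤ (L i i) * ‖v i‖ := by
    rw [← norm_mul, hsplit]
    calc ‖∑ k ∈ Finset.univ.erase i, (L i k : ℂ) * v k‖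
        ≤ ∑ k ∈ Finset.univ.erase i, ‖(L i k : ℂ) * v k‖ :=
          norm_sum_le _ _
      _ ≤ ∑ k ∈ Finset.univ.erase i, (-(L i k)) * ‖v i‖ := by
          apply Finset.sum_le_sum
          intro k hk
          rw [norm_mul, Complex.norm_real, Real.norm_eq_abs,
            abs_of_nonpos (hoff i k (Ne.symm (Finset.ne_of_mem_erase hk)))]
          exact mul_le_mul_of_nonneg_left (hi k (Finset.mem_univ k)) (neg_nonneg.mpr (hoff i k (Ne.symm (Finset.ne_of_mem_erase hk))))
      _ = (L i i) * ‖v i‖ := by rw [← Finset.sum_mul, hcsum]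
  have hball : ‖μ - (L i i : ℂ)‖ ≤ L i i :=
    le_of_mul_le_mul_right habs hvi
  have hc0 : (0 : ℝ) ≤ L i i := le_trans (norm_nonneg _) hball
  by_cases hre : 0 < μ.re
  · exact Or.inr hre
  · left
    push_neg at hre
    have hsq : (μ.re - L i i) ^ 2 + μ.im ^ 2 ≤ (L i i) ^ 2 := by
      have h1 : ‖μ - (L i i : ℂ)‖ ^ 2 ≤ (L i i) ^ 2 :=
        pow_le_pow_left₀ (norm_nonneg _) hball 2
      rw [Complex.sq_norm, Complex.normSq_apply] at h1
      simpa [pow_two] using h1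
    have hre0 : μ.re ^ 2 + μ.im ^ 2 ≤ 0 := by nlinarith
    have h1 : μ.re = 0 := by nlinarith [sq_nonneg μ.re, sq_nonneg μ.im]
    have h2 : μ.im = 0 := by nlinarith [sq_nonneg μ.re, sq_nonneg μ.im]
    exact Complex.ext h1 h2

def myEquiv (N : ℕ) (l : Fin N → ℕ) :
    ((i : Fin N) × Fin (l i + 1)) ≃ (Fin N ⊕ ((i : Fin N) × Fin (l i))) where
  toFun p := Fin.cases (Sum.inl p.1) (fun b => Sum.inr ⟨p.1, b⟩) p.2
  invFun s := Sum.elim (fun i => ⟨i, (0 : Fin (l i + 1))⟩) (fun q => ⟨q.1, q.2.succ⟩) s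
  left_inv := by
    rintro ⟨i, a⟩
    induction a using Fin.cases <;> simp
  right_inv := by
    rintro (i | ⟨i, b⟩) <;> simp

@[simp] lemma myEquiv_symm_inl {N : ℕ} {l : Fin N → ℕ} (i : Fin N) :
    (myEquiv N l).symm (Sum.inl i) = ⟨i, 0⟩ := rfl

@[simp] lemma myEquiv_symm_inr {N : ℕ} {l : Fin N → ℕ} (i : Fin N) (b : Fin (l i)) :
    (myEquiv N l).symm (Sum.inr ⟨i, b⟩) = ⟨i, b.succ⟩ := rfl

/-- Under the inter-cluster common influence assumption, all eigenvalues of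
the reduced matrix `Lhat` have positive real parts iff the Laplacian `ℒ` of the full
graph and the quotient Laplacian `LG` have equal numbers of zero eigenvalues (counted
with algebraic multiplicity). -/
theorem stmt1 (N : ℕ) (l : Fin N → ℕ)
    (ℒ : Matrix ((i : Fin N) × Fin (l i + 1)) ((i : Fin N) × Fin (l i + 1)) ℝ)
    (β : Fin N → Fin N → ℝ)
    (hoff : ∀ v k, v ≠ k → ℒ v k ≤ 0)
    (hrow : ∀ v, ∑ k, ℒ v k = 0)
    (hblock : ∀ (i : Fin N) (a : Fin (l i + 1)) (j : Fin N),
      ∑ b : Fin (l j + 1), ℒ ⟨i, a⟩ ⟨j, b⟩ = β i j)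
    (LG : Matrix (Fin N) (Fin N) ℝ) (hLG : ∀ i j, LG i j = β i j)
    (Lhat : Matrix ((i : Fin N) × Fin (l i)) ((i : Fin N) × Fin (l i)) ℝ)
    (hLhat : ∀ (i : Fin N) (a : Fin (l i)) (j : Fin N) (b : Fin (l j)),
      Lhat ⟨i, a⟩ ⟨j, b⟩ = ℒ ⟨i, a.succ⟩ ⟨j, b.succ⟩ - ℒ ⟨i, 0⟩ ⟨j, b.succ⟩) :
    (∀ μ ∈ spectrum ℂ (Lhat.map (Complex.ofReal)), 0 < μ.re) ↔
    ℒ.charpoly.rootMultiplicity 0 = LG.charpoly.rootMultiplicity 0 := by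
  classical
  let A : Matrix (Fin N) (Fin N) ℝ := fun i j => ℒ ⟨i, 0⟩ ⟨j, 0⟩
  let B : Matrix (Fin N) ((i : Fin N) × Fin (l i)) ℝ := fun i q => ℒ ⟨i, 0⟩ ⟨q.1, q.2.succ⟩
  let Cc : Matrix ((i : Fin N) × Fin (l i)) (Fin N) ℝ := fun p j => ℒ ⟨p.1, p.2.succ⟩ ⟨j, 0⟩
  let D : Matrix ((i : Fin N) × Fin (l i)) ((i : Fin N) × Fin (l i)) ℝ := fun p q => ℒ ⟨p.1, p.2.succ⟩ ⟨q.1, q.2.succ⟩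
  let P : Matrix ((i : Fin N) × Fin (l i)) (Fin N) ℝ := fun p j => if p.1 = j then -1 else 0
  let T : Matrix (Fin N ⊕ ((i : Fin N) × Fin (l i))) (Fin N ⊕ ((i : Fin N) × Fin (l i))) ℝ := Matrix.fromBlocks 1 0 P 1
  let Ti : Matrix (Fin N ⊕ ((i : Fin N) × Fin (l i))) (Fin N ⊕ ((i : Fin N) × Fin (l i))) ℝ := Matrix.fromBlocks 1 0 (-P) 1
  have hTTi : T * Ti = 1 := by
    show Matrix.fromBlocks 1 0 P 1 * Matrix.fromBlocks 1 0 (-P) 1 = 1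
    rw [Matrix.fromBlocks_multiply, ← Matrix.fromBlocks_one]
    simp
  have hreidx : (Matrix.reindex (myEquiv N l) (myEquiv N l)) ℒ = Matrix.fromBlocks A B Cc D := by
    ext s t
    rcases s with i | ⟨i, a⟩ <;> rcases t with j | ⟨j, b⟩ <;>
      simp [Matrix.reindex_apply, Matrix.submatrix_apply, A, B, Cc, D,
        Matrix.fromBlocks]
  have hTL : A + B * -P = LG := by
    ext i j
    have hsum : (B * -P) i j = ∑ b : Fin (l j), ℒ ⟨i, 0⟩ ⟨j, b.succ⟩ := by
      rw [Matrix.mul_apply]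
      rw [← Finset.univ_sigma_univ, Finset.sum_sigma]
      rw [Finset.sum_eq_single_of_mem j (Finset.mem_univ j)]
      · simp only [Matrix.neg_apply]
        simp [B, P]
      · intro k _ hk
        simp only [Matrix.neg_apply]
        simp [B, P, hk]
    rw [Matrix.add_apply, hsum, hLG]
    have := hblock i 0 j
    rw [Fin.sum_univ_succ] at this
    simpa [A] using this
  have hPB : ∀ (p q : (i : Fin N) × Fin (l i)), (P * B) p q = -ℒ ⟨p.1, 0⟩ ⟨q.1, q.2.succ⟩ := by
    intro p q
    rw [Matrix.mul_apply]
    rw [Finset.sum_eq_single_of_mem p.1 (Finset.mem_univ p.1)]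
    · simp [P, B]
    · intro k _ hk
      simp [P, B, Ne.symm hk]
  have hBR : P * B + D = Lhat := by
    ext ⟨i, a⟩ ⟨j, b⟩
    rw [Matrix.add_apply, hLhat, hPB ⟨i, a⟩ ⟨j, b⟩]
    simp [D]
    ring
  have hBL : P * A + Cc + (P * B + D) * -P = 0 := by
    ext ⟨i, a⟩ j
    have hPA : (P * A) ⟨i, a⟩ j = -ℒ ⟨i, 0⟩ ⟨j, 0⟩ := by
      rw [Matrix.mul_apply]
      rw [Finset.sum_eq_single_of_mem i (Finset.mem_univ i)]
      · simp [P, A]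
      · intro k _ hk
        simp [P, A, Ne.symm hk]
    have hDP : ((P * B + D) * -P) ⟨i, a⟩ j
        = ∑ b : Fin (l j), (ℒ ⟨i, a.succ⟩ ⟨j, b.succ⟩ - ℒ ⟨i, 0⟩ ⟨j, b.succ⟩) := by
      rw [Matrix.mul_apply]
      rw [← Finset.univ_sigma_univ, Finset.sum_sigma]
      rw [Finset.sum_eq_single_of_mem j (Finset.mem_univ j)]
      · apply Finset.sum_congr rfl
        intro b _
        rw [Matrix.add_apply, hPB ⟨i, a⟩ ⟨j, b⟩]
        simp only [Matrix.neg_apply]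
        simp [D, P]
        ring
      · intro k _ hk
        simp only [Matrix.neg_apply]
        simp [P, hk]
    rw [Matrix.add_apply, Matrix.add_apply, hPA, hDP, Matrix.zero_apply]
    have h1 := hblock i a.succ j
    have h2 := hblock i 0 j
    rw [Fin.sum_univ_succ] at h1 h2
    simp only [Cc, Finset.sum_sub_distrib]
    linarith
  have hkey : T * Matrix.fromBlocks A B Cc D * Ti = Matrix.fromBlocks LG B 0 Lhat := by
    show Matrix.fromBlocks 1 0 P 1 * Matrix.fromBlocks A B Cc D * Matrix.fromBlocks 1 0 (-P) 1
      = Matrix.fromBlocks LG B 0 Lhat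
    rw [Matrix.fromBlocks_multiply, Matrix.fromBlocks_multiply]
    simp only [Matrix.one_mul, Matrix.mul_one, Matrix.zero_mul, Matrix.mul_zero,
      add_zero, zero_add, one_mul, mul_one, zero_mul, mul_zero]
    rw [hBL, hTL, hBR]
  have hfact : ℒ.charpoly = LG.charpoly * Lhat.charpoly := by
    calc ℒ.charpoly = ((Matrix.reindex (myEquiv N l) (myEquiv N l)) ℒ).charpoly :=
          (Matrix.charpoly_reindex _ ℒ).symm
      _ = (Matrix.fromBlocks A B Cc D).charpoly := by rw [hreidx]
      _ = (T * Matrix.fromBlocks A B Cc D * Ti).charpoly :=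
          (my_charpoly_conj T Ti _ hTTi).symm
      _ = (Matrix.fromBlocks LG B 0 Lhat).charpoly := by rw [hkey]
      _ = LG.charpoly * Lhat.charpoly := by rw [Matrix.charpoly_fromBlocks_zero₂₁]
  have hrm : ℒ.charpoly.rootMultiplicity 0
      = LG.charpoly.rootMultiplicity 0 + Lhat.charpoly.rootMultiplicity 0 := by
    rw [hfact, Polynomial.rootMultiplicity_mul
      (mul_ne_zero LG.charpoly_monic.ne_zero Lhat.charpoly_monic.ne_zero)]
  have hiff2 : (ℒ.charpoly.rootMultiplicity 0 = LG.charpoly.rootMultiplicity 0) ↔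
      ¬ Lhat.charpoly.IsRoot 0 := by
    rw [hrm, add_eq_left]
    constructor
    · intro h0 hroot
      have := (Polynomial.rootMultiplicity_pos Lhat.charpoly_monic.ne_zero).mpr hroot
      omega
    · intro h
      exact Polynomial.rootMultiplicity_eq_zero h
  have hmapq : (Lhat.map Complex.ofReal).charpoly = Lhat.charpoly.map Complex.ofRealHom :=
    Matrix.charpoly_map Lhat Complex.ofRealHom
  have hq0 : Lhat.charpoly.IsRoot 0 ↔ (0 : ℂ) ∈ spectrum ℂ (Lhat.map Complex.ofReal) := by
    rw [my_spec_iff_root, hmapq]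
    simp only [Polynomial.IsRoot, ← Polynomial.coeff_zero_eq_eval_zero, Polynomial.coeff_map]
    simp [Complex.ofReal_eq_zero]
  have hsub : ∀ μ : ℂ, μ ∈ spectrum ℂ (Lhat.map Complex.ofReal) →
      μ ∈ spectrum ℂ (ℒ.map Complex.ofReal) := by
    intro μ hμ
    rw [my_spec_iff_root] at hμ ⊢
    have hmapL : (ℒ.map Complex.ofReal).charpoly = ℒ.charpoly.map Complex.ofRealHom :=
      Matrix.charpoly_map ℒ Complex.ofRealHom
    rw [hmapL, hfact, Polynomial.map_mul]
    rw [hmapq] at hμ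
    simp only [Polynomial.IsRoot, Polynomial.eval_mul] at hμ ⊢
    rw [hμ, mul_zero]
  constructor
  · intro hpos
    rw [hiff2]
    intro hroot
    have := hpos 0 (hq0.mp hroot)
    simp at this
  · intro heq μ hμ
    have hroot0 : ¬ Lhat.charpoly.IsRoot 0 := hiff2.mp heq
    rcases my_gersh ℒ hoff hrow (hsub μ hμ) with h0 | hpos
    · exact absurd (hq0.mpr (h0 ▸ hμ)) hroot0
    · exact hpos
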